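/- Let π : G → A be a partial representation of a group G in a unital associative K-algebra A, and for g ∈ G set e_g := π(g)π(g⁻¹). For any m ≥ 1 and any g₁, …, g_m ∈ G, define h₁ = g₁ and h_i = g_{i−1}⁻¹ g_i for i = 2, …, m. Then e_{g₁} e_{g₂} ⋯ e_{g_m} = π(h₁) π(h₂) ⋯ π(h_m) · π(h_m⁻¹) ⋯ π(h₂⁻¹) π(h₁⁻¹). -/

import Mathlib

/-- A partial representation of a group `G` in a unital associative algebra `A`. -/
def IsPartialRep {G A : Type*} [Group G] [Ring A] (π : G → A) : Prop :=
  (∀ s t : G, π s * π t * π (t⁻¹) = π (s * t) * π (t⁻¹)) ∧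
  (∀ s t : G, π (s⁻¹) * π s * π t = π (s⁻¹) * π (s * t)) ∧
  π 1 = 1

section Aux
variable {G A : Type*} [Group G] [Ring A] {π : G → A}

lemma pr_comm (hπ : IsPartialRep π) (t s : G) :
    π t * (π s * π s⁻¹) = π (t * s) * π (t * s)⁻¹ * π t := by
  obtain ⟨ha, hb, -⟩ := hπ
  have h1 : π t * π s * π s⁻¹ = π (t * s) * π s⁻¹ := ha t s
  have h2 := hb (t * s)⁻¹ t
  simp only [inv_inv] at h2
  have h3 : (t * s)⁻¹ * t = s⁻¹ := by group
  rw [h3] at h2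
  rw [← mul_assoc, h1, h2]

lemma pr_comm' (hπ : IsPartialRep π) (t s : G) :
    π t * (π (t⁻¹ * s) * π (t⁻¹ * s)⁻¹) = π s * π s⁻¹ * π t := by
  have := pr_comm hπ t (t⁻¹ * s)
  simpa using this

lemma pr_ecomm (hπ : IsPartialRep π) (s t : G) :
    (π s * π s⁻¹) * (π t * π t⁻¹) = (π t * π t⁻¹) * (π s * π s⁻¹) := by
  have h1 : π s * π s⁻¹ * π t = π t * (π (t⁻¹ * s) * π (t⁻¹ * s)⁻¹) :=
    (pr_comm' hπ t s).symm
  have h2 : π (t⁻¹ * s) * π (t⁻¹ * s)⁻¹ * π t⁻¹ = π t⁻¹ * (π s * π s⁻¹) := by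
    have := pr_comm' hπ t⁻¹ (t⁻¹ * s)
    simp only [inv_inv, mul_inv_cancel_left] at this
    exact this.symm
  calc (π s * π s⁻¹) * (π t * π t⁻¹)
      = (π s * π s⁻¹ * π t) * π t⁻¹ := (mul_assoc _ _ _).symm
    _ = π t * ((π (t⁻¹ * s) * π (t⁻¹ * s)⁻¹) * π t⁻¹) := by rw [h1, mul_assoc]
    _ = π t * (π t⁻¹ * (π s * π s⁻¹)) := by rw [h2]
    _ = (π t * π t⁻¹) * (π s * π s⁻¹) := (mul_assoc _ _ _).symm

lemma pr_move (hπ : IsPartialRep π) (t : G) :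
    ∀ l : List G, π t * (l.map (fun s => π (t⁻¹ * s) * π (t⁻¹ * s)⁻¹)).prod
      = (l.map (fun s => π s * π s⁻¹)).prod * π t := by
  intro l
  induction l with
  | nil => simp
  | cons a l ih =>
    simp only [List.map_cons, List.prod_cons]
    conv_lhs => rw [← mul_assoc]
    rw [pr_comm' hπ t a, mul_assoc, ih, ← mul_assoc]

lemma pr_moveE (hπ : IsPartialRep π) (t : G) (l : List G) :
    (l.map (fun s => π s * π s⁻¹)).prod * (π t * π t⁻¹)
      = (π t * π t⁻¹) * (l.map (fun s => π s * π s⁻¹)).prod := by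
  induction l with
  | nil => simp
  | cons a l ih =>
    simp only [List.map_cons, List.prod_cons]
    rw [mul_assoc, ih, ← mul_assoc, pr_ecomm hπ a t, mul_assoc]

end Aux

lemma pr_aux {G A : Type*} [Group G] [Ring A] {π : G → A} (hπ : IsPartialRep π) :
    ∀ n (g h : Fin (n+1) → G), h 0 = g 0 →
    (∀ i : Fin (n+1), ∀ _ : 0 < (i:ℕ), h i = (g ⟨(i:ℕ)-1, by omega⟩)⁻¹ * g i) →
    (List.ofFn fun i => π (g i) * π ((g i)⁻¹)).prod =
      (List.ofFn fun i => π (h i)).prod *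
        ((List.ofFn fun i => π ((h i)⁻¹)).reverse).prod := by
  intro n
  induction n with
  | zero =>
    intro g h h0 _
    simp [List.ofFn_succ, h0]
  | succ n ih =>
    intro g h h0 hhi
    set g' : Fin (n+1) → G := fun i => (g 0)⁻¹ * g i.succ with hg'
    set h' : Fin (n+1) → G := fun i => h i.succ with hh'
    have hc0 : h' 0 = g' 0 := by
      have h1 := hhi 1 (by simp)
      have e1 : ((1 : Fin (n+2)) : ℕ) = 1 := by simp
      have e0 : (⟨(( (1:Fin (n+2)) : ℕ)) - 1, by omega⟩ : Fin (n+2)) = 0 := by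
        ext; simp
      rw [e0] at h1
      simpa [hg', hh', Fin.succ_zero_eq_one] using h1
    have hci : ∀ i : Fin (n+1), ∀ _ : 0 < (i:ℕ),
        h' i = (g' ⟨(i:ℕ)-1, by omega⟩)⁻¹ * g' i := by
      intro i hi
      have h1 := hhi i.succ (by simp)
      have e0 : (⟨((i.succ : ℕ)) - 1, by omega⟩ : Fin (n+2)) =
          (⟨(i:ℕ)-1, by omega⟩ : Fin (n+1)).succ := by
        ext; simp [Fin.val_succ]; omega
      rw [e0] at h1
      simp only [hh', hg', h1, mul_inv_rev, inv_inv]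
      group
    have IH := ih g' h' hc0 hci
    -- expand ofFn
    rw [List.ofFn_succ (f := fun i => π (g i) * π ((g i)⁻¹)),
        List.ofFn_succ (f := fun i => π (h i)),
        List.ofFn_succ (f := fun i => π ((h i)⁻¹))]
    simp only [List.prod_cons, List.reverse_cons, List.prod_append, List.prod_cons,
      List.prod_nil, mul_one]
    -- Now: e(g 0) * Etail = (π (h 0) * Hfwd) * (Hrev * π (h 0)⁻¹)
    have key : π (g 0) * (List.ofFn fun i => π (g' i) * π ((g' i)⁻¹)).prod
        = (List.ofFn fun i : Fin (n+1) => π (g i.succ) * π ((g i.succ)⁻¹)).prod * π (g 0) := by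
      have := pr_move hπ (g 0) (List.ofFn fun i : Fin (n+1) => g i.succ)
      simpa [List.map_ofFn, Function.comp_def, hg'] using this
    have hrhs : (π (h 0) * (List.ofFn fun i => π (h' i)).prod) *
        (((List.ofFn fun i => π ((h' i)⁻¹)).reverse).prod * π ((h 0)⁻¹))
        = π (g 0) * ((List.ofFn fun i => π (g' i) * π ((g' i)⁻¹)).prod) * π ((g 0)⁻¹) := by
      rw [h0]
      calc (π (g 0) * (List.ofFn fun i => π (h' i)).prod) *
          (((List.ofFn fun i => π ((h' i)⁻¹)).reverse).prod * π ((g 0)⁻¹))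
          = π (g 0) * ((List.ofFn fun i => π (h' i)).prod *
            ((List.ofFn fun i => π ((h' i)⁻¹)).reverse).prod) * π ((g 0)⁻¹) := by
            rw [mul_assoc, mul_assoc, mul_assoc]
        _ = π (g 0) * ((List.ofFn fun i => π (g' i) * π ((g' i)⁻¹)).prod) * π ((g 0)⁻¹) := by
            rw [IH]
    simp only [hh'] at hrhs
    rw [hrhs, key, mul_assoc _ (π (g 0)) (π ((g 0)⁻¹))]
    have hmv := pr_moveE hπ (g 0) (List.ofFn fun i : Fin (n+1) => g i.succ)
    simp only [List.map_ofFn, Function.comp] at hmv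
    exact hmv.symm

theorem partialRep_e_prod {K G A : Type*} [Field K] [Group G] [Ring A] [Algebra K A]
    (π : G → A) (hπ : IsPartialRep π) (m : ℕ) (hm : 1 ≤ m)
    (g h : Fin m → G)
    (hh0 : ∀ (h0 : 0 < m), h ⟨0, h0⟩ = g ⟨0, h0⟩)
    (hhi : ∀ i : Fin m, ∀ (hi : 0 < (i : ℕ)),
      h i = (g ⟨(i : ℕ) - 1, by omega⟩)⁻¹ * g i) :
    (List.ofFn fun i => π (g i) * π ((g i)⁻¹)).prod =
      (List.ofFn fun i => π (h i)).prod *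
        ((List.ofFn fun i => π ((h i)⁻¹)).reverse).prod := by
  obtain ⟨n, rfl⟩ : ∃ n, m = n + 1 := ⟨m - 1, by omega⟩
  exact pr_aux hπ n g h (by simpa using hh0 (by omega)) hhi
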